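/- Determinacy of finite games (Theorem 9.2): let n l : ℕ with 0 < l and let X be a set of plays s : Fin n → Fin l, where player I makes the moves at even indices and player II at odd indices. Say s I-obeys σ : List (Fin l) → Fin l if for all i with 2*i < n, s (2*i) = σ [s 0, …, s (2*i−1)], and s II-obeys τ : List (Fin l) → Fin l if for all i with 2*i+1 < n, s (2*i+1) = τ [s 0, …, s (2*i)]. Then: (I-determinacy) if for every τ there exists s ∈ X with s II-obeying τ, then there exists σ such that every s I-obeying σ lies in X; and (II-determinacy) if for every σ there exists s ∈ X with s I-obeying σ, then there exists τ such that every s II-obeying τ lies in X. -/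

import Mathlib

open Classical in
/-- Backward-induction "forcing" predicate: from position `p` with `m` moves remaining,
the player moving at positions whose length satisfies `P` can force the play into `X`. -/
def ForceW (n l : ℕ) (X : Set (Fin n → Fin l)) (P : ℕ → Bool) : ℕ → List (Fin l) → Prop
  | 0, p => ∀ s : Fin n → Fin l, List.ofFn s = p → s ∈ X
  | m + 1, p =>
      if P p.length then ∃ a : Fin l, ForceW n l X P m (p ++ [a])
      else ∀ a : Fin l, ForceW n l X P m (p ++ [a])

open Classical in
noncomputable def stratW (n l : ℕ) (hl : 0 < l) (X : Set (Fin n → Fin l)) (P : ℕ → Bool) :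
    List (Fin l) → Fin l :=
  fun q =>
    if h : ∃ a : Fin l, ForceW n l X P (n - (q.length + 1)) (q ++ [a]) then h.choose
    else ⟨0, hl⟩

lemma take_ofFn' (n l k : ℕ) (s : Fin n → Fin l) (f : ∀ j : Fin k, (j : ℕ) < n) :
    List.ofFn (fun j : Fin k => s ⟨j, f j⟩) = (List.ofFn s).take k := by
  have hk : k ≤ n := by
    cases k with
    | zero => omega
    | succ k' => exact f ⟨k', Nat.lt_succ_self _⟩
  apply List.ext_getElem
  · simp [hk]
  · intro i h1 h2
    simp

lemma take_succ_ofFn (n l k : ℕ) (s : Fin n → Fin l) (hk : k < n) :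
    (List.ofFn s).take (k + 1) = (List.ofFn s).take k ++ [s ⟨k, hk⟩] := by
  apply List.ext_getElem
  · simp; omega
  · intro i h1 h2
    rcases Nat.lt_or_ge i k with h | h
    · simp [List.getElem_take, List.getElem_append, h]
      intro h'; omega
    · have hik : i = k := by simp at h1; omega
      subst hik
      simp [List.getElem_take, List.getElem_append, h]

lemma forceW_neg (n l : ℕ) (X : Set (Fin n → Fin l)) (P : ℕ → Bool) :
    ∀ (m : ℕ) (p : List (Fin l)), p.length + m = n →
      (¬ ForceW n l X P m p ↔ ForceW n l Xᶜ (fun k => !P k) m p) := by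
  intro m
  induction m with
  | zero =>
    intro p hlen
    simp only [ForceW]
    constructor
    · intro h s hs
      rw [not_forall] at h
      obtain ⟨s₀, hs₀⟩ := h
      rw [Classical.not_imp] at hs₀
      have : s = s₀ := by
        apply List.ofFn_injective
        rw [hs, hs₀.1]
      rw [this]
      exact hs₀.2
    · intro h hF
      have hlen' : p.length = n := by omega
      set s₀ : Fin n → Fin l := fun i => p.get ⟨i, by omega⟩ with hs₀
      have hofn : List.ofFn s₀ = p := by
        apply List.ext_getElem
        · simp [hlen']
        · intro i h1 h2; simp [hs₀]
      exact h s₀ hofn (hF s₀ hofn)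
  | succ m ih =>
    intro p hlen
    simp only [ForceW]
    rcases Bool.eq_false_or_eq_true (P p.length) with hp | hp
    · simp only [hp, Bool.not_false, Bool.not_true, if_true, if_false, Bool.false_eq_true,
        ite_true, ite_false, Bool.true_eq_false]
      rw [not_exists]
      exact forall_congr' fun a => ih (p ++ [a]) (by simp; omega)
    · simp only [hp, Bool.not_false, Bool.not_true, if_true, if_false, Bool.false_eq_true,
        ite_true, ite_false, Bool.true_eq_false]
      rw [not_forall]
      exact exists_congr fun a => ih (p ++ [a]) (by simp; omega)

lemma forceW_strat (n l : ℕ) (hl : 0 < l) (X : Set (Fin n → Fin l)) (P : ℕ → Bool) :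
    ∀ (m : ℕ) (p : List (Fin l)), p.length + m = n → ForceW n l X P m p →
      ∀ s : Fin n → Fin l, (List.ofFn s).take p.length = p →
        (∀ (k : ℕ) (h : k < n), p.length ≤ k → P k = true →
          s ⟨k, h⟩ = stratW n l hl X P ((List.ofFn s).take k)) → s ∈ X := by
  intro m
  induction m with
  | zero =>
    intro p hlen hF s hq _
    have hlen' : p.length = n := by omega
    apply hF
    rw [← hq, hlen']
    exact (List.take_of_length_le (by simp)).symm
  | succ m ih =>
    intro p hlen hF s hq hob
    have hk : p.length < n := by omega
    have hm : n - (p.length + 1) = m := by omega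
    simp only [ForceW] at hF
    cases hp : P p.length with
    | true =>
      rw [hp, if_pos rfl] at hF
      have hobk := hob p.length hk le_rfl hp
      rw [hq] at hobk
      unfold stratW at hobk
      rw [hm, dif_pos hF] at hobk
      have hspec := hF.choose_spec
      rw [← hobk] at hspec
      apply ih (p ++ [s ⟨p.length, hk⟩]) (by simp; omega) hspec s
      · have h2 : List.take (p.length + 1) (List.ofFn s) = p ++ [s ⟨p.length, hk⟩] := by
          rw [take_succ_ofFn n l p.length s hk, hq]
        simpa using h2
      · intro k h hle ht
        exact hob k h (by simp at hle; omega) ht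
    | false =>
      rw [hp] at hF
      simp only [Bool.false_eq_true, if_false] at hF
      apply ih (p ++ [s ⟨p.length, hk⟩]) (by simp; omega) (hF _) s
      · have h2 : List.take (p.length + 1) (List.ofFn s) = p ++ [s ⟨p.length, hk⟩] := by
          rw [take_succ_ofFn n l p.length s hk, hq]
        simpa using h2
      · intro k h hle ht
        exact hob k h (by simp at hle; omega) ht

/-- The play `s` (of length `n`) I-obeys the strategy `σ`: at every even index,
the move is the one prescribed by `σ` applied to the list of previous moves. -/
def ObeysI (n l : ℕ) (s : Fin n → Fin l) (σ : List (Fin l) → Fin l) : Prop :=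
  ∀ (i : ℕ) (h : 2 * i < n),
    s ⟨2 * i, h⟩ = σ (List.ofFn fun j : Fin (2 * i) => s ⟨j, Nat.lt_trans j.isLt h⟩)

/-- The play `s` (of length `n`) II-obeys the strategy `τ`: at every odd index,
the move is the one prescribed by `τ` applied to the list of previous moves. -/
def ObeysII (n l : ℕ) (s : Fin n → Fin l) (τ : List (Fin l) → Fin l) : Prop :=
  ∀ (i : ℕ) (h : 2 * i + 1 < n),
    s ⟨2 * i + 1, h⟩ = τ (List.ofFn fun j : Fin (2 * i + 1) => s ⟨j, Nat.lt_trans j.isLt h⟩)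

/-- Determinacy of finite games (Theorem 9.2). -/
theorem determinacy_of_finite_games (n l : ℕ) (hl : 0 < l)
    (X : Set (Fin n → Fin l)) :
    ((∀ τ : List (Fin l) → Fin l, ∃ s ∈ X, ObeysII n l s τ) →
      ∃ σ : List (Fin l) → Fin l, ∀ s, ObeysI n l s σ → s ∈ X) ∧
    ((∀ σ : List (Fin l) → Fin l, ∃ s ∈ X, ObeysI n l s σ) →
      ∃ τ : List (Fin l) → Fin l, ∀ s, ObeysII n l s τ → s ∈ X) := by
  constructor
  · intro H
    by_cases hF : ForceW n l X (fun k => decide (k % 2 = 0)) n []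
    · refine ⟨stratW n l hl X (fun k => decide (k % 2 = 0)), fun s hs => ?_⟩
      apply forceW_strat n l hl X _ n [] (by simp) hF s (by simp)
      intro k hk _ hPk
      have hk2 : k % 2 = 0 := by simpa using hPk
      obtain ⟨i, rfl⟩ : ∃ i, k = 2 * i := ⟨k / 2, by omega⟩
      rw [← take_ofFn' n l (2 * i) s (fun j => Nat.lt_trans j.isLt hk)]
      exact hs i hk
    · exfalso
      have hF' := (forceW_neg n l X _ n [] (by simp)).mp hF
      obtain ⟨s, hsX, hsOb⟩ := H (stratW n l hl Xᶜ (fun k => !decide (k % 2 = 0)))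
      refine forceW_strat n l hl Xᶜ _ n [] (by simp) hF' s (by simp) ?_ hsX
      intro k hk _ hPk
      have hk2 : ¬ (k % 2 = 0) := by simpa using hPk
      obtain ⟨i, rfl⟩ : ∃ i, k = 2 * i + 1 := ⟨k / 2, by omega⟩
      rw [← take_ofFn' n l (2 * i + 1) s (fun j => Nat.lt_trans j.isLt hk)]
      exact hsOb i hk
  · intro H
    by_cases hF : ForceW n l X (fun k => decide (k % 2 = 1)) n []
    · refine ⟨stratW n l hl X (fun k => decide (k % 2 = 1)), fun s hs => ?_⟩
      apply forceW_strat n l hl X _ n [] (by simp) hF s (by simp)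
      intro k hk _ hPk
      have hk2 : k % 2 = 1 := by simpa using hPk
      obtain ⟨i, rfl⟩ : ∃ i, k = 2 * i + 1 := ⟨k / 2, by omega⟩
      rw [← take_ofFn' n l (2 * i + 1) s (fun j => Nat.lt_trans j.isLt hk)]
      exact hs i hk
    · exfalso
      have hF' := (forceW_neg n l X _ n [] (by simp)).mp hF
      obtain ⟨s, hsX, hsOb⟩ := H (stratW n l hl Xᶜ (fun k => !decide (k % 2 = 1)))
      refine forceW_strat n l hl Xᶜ _ n [] (by simp) hF' s (by simp) ?_ hsX
      intro k hk _ hPk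
      have hk2 : ¬ (k % 2 = 1) := by simpa using hPk
      obtain ⟨i, rfl⟩ : ∃ i, k = 2 * i := ⟨k / 2, by omega⟩
      rw [← take_ofFn' n l (2 * i) s (fun j => Nat.lt_trans j.isLt hk)]
      exact hsOb i hk
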